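/- For every B ≥ 1 there exist constants c₀ > 0 and C > 0, depending only on B, with the following property. Let a₁, a₂, z₁, z₂ ∈ ℂ satisfy a₁·a₂ ≠ 0, z₁ ≠ z₂, max(|z₁|,|z₂|) ≤ B, and |a₁| + |a₂| ≤ B, and set y_j := a₁·z₁^j + a₂·z₂^j for j = 0,1,2,3. Let η ≥ 0 with η ≤ c₀·|a₁a₂|·|z₁−z₂|⁴, and let ỹ₀, ỹ₁, ỹ₂, ỹ₃ ∈ ℂ with |ỹ_j − y_j| ≤ η for each j. Then Δ̃₀ := ỹ₀ỹ₂ − ỹ₁² satisfies |Δ̃₀| ≥ (1/2)·|a₁a₂|·|z₁−z₂|², and setting s̃₁ := (ỹ₀ỹ₃ − ỹ₁ỹ₂)/Δ̃₀ and s̃₂ := (ỹ₁ỹ₃ − ỹ₂²)/Δ̃₀, the quadratic polynomial λ² − s̃₁λ + s̃₂ has exactly one root z̃_k in the open disk {λ : |λ − z_k| < |z₁−z₂|/4} for each k ∈ {1,2}, and these roots satisfy |z̃_k − z_k| ≤ C·η/(|a₁a₂|·|z₁−z₂|³) for k = 1,2. -/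

import Mathlib

open Complex

/-- triangle helper: `|p - q| ≤ |p| + |q|`. -/
private lemma cabs_sub_le (p q : ℂ) : ‖p - q‖ ≤ ‖p‖ + ‖q‖ := by
  simpa using norm_sub_le p q

/-- reverse triangle helper: `|q| ≤ |p| + |p - q|`. -/
private lemma cabs_le_add_sub (p q : ℂ) :
    ‖q‖ ≤ ‖p‖ + ‖p - q‖ := by
  have h := cabs_sub_le p (p - q)
  simpa using h

/-- perturbation of a product. -/
private lemma abs_prod_pert (u v U V : ℂ) (η M : ℝ)
    (hu : ‖u - U‖ ≤ η) (hv : ‖v - V‖ ≤ η)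
    (hU : ‖U‖ ≤ M) (hV : ‖V‖ ≤ M)
    (hη1 : η ≤ 1) (hM : 1 ≤ M) :
    ‖u * v - U * V‖ ≤ 3 * M * η := by
  have hη0 : 0 ≤ η := le_trans (norm_nonneg _) hu
  have key : u * v - U * V = (u - U) * V + U * (v - V) + (u - U) * (v - V) := by ring
  rw [key]
  have t1 : ‖(u - U) * V‖ ≤ η * M := by
    rw [norm_mul]; exact mul_le_mul hu hV (norm_nonneg _) hη0
  have t2 : ‖U * (v - V)‖ ≤ M * η := by
    rw [norm_mul]; exact mul_le_mul hU hv (norm_nonneg _) (le_trans zero_le_one hM)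
  have t3 : ‖(u - U) * (v - V)‖ ≤ η * η := by
    rw [norm_mul]; exact mul_le_mul hu hv (norm_nonneg _) hη0
  have tr1 := norm_add_le ((u - U) * V + U * (v - V)) ((u - U) * (v - V))
  have tr2 := norm_add_le ((u - U) * V) (U * (v - V))
  nlinarith

/-- bound on the exact samples. -/
private lemma sample_bound (a₁ a₂ z₁ z₂ : ℂ) (B : ℝ) (hB : 1 ≤ B)
    (h1 : ‖z₁‖ ≤ B) (h2 : ‖z₂‖ ≤ B)
    (ha : ‖a₁‖ + ‖a₂‖ ≤ B) (n : ℕ) (hn : n ≤ 3) :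
    ‖a₁ * z₁ ^ n + a₂ * z₂ ^ n‖ ≤ B ^ 4 := by
  have hB0 : (0:ℝ) ≤ B := le_trans zero_le_one hB
  have hz1n : ‖z₁‖ ^ n ≤ B ^ 3 :=
    le_trans (pow_le_pow_left₀ (norm_nonneg _) h1 n) (pow_le_pow_right₀ hB hn)
  have hz2n : ‖z₂‖ ^ n ≤ B ^ 3 :=
    le_trans (pow_le_pow_left₀ (norm_nonneg _) h2 n) (pow_le_pow_right₀ hB hn)
  have ha1 : (0:ℝ) ≤ ‖a₁‖ := norm_nonneg _
  have ha2 : (0:ℝ) ≤ ‖a₂‖ := norm_nonneg _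
  calc ‖a₁ * z₁ ^ n + a₂ * z₂ ^ n‖
      ≤ ‖a₁ * z₁ ^ n‖ + ‖a₂ * z₂ ^ n‖ :=
        norm_add_le _ _
    _ = ‖a₁‖ * ‖z₁‖ ^ n + ‖a₂‖ * ‖z₂‖ ^ n := by
        rw [norm_mul, norm_mul, norm_pow, norm_pow]
    _ ≤ ‖a₁‖ * B ^ 3 + ‖a₂‖ * B ^ 3 := by
        gcongr
    _ = (‖a₁‖ + ‖a₂‖) * B ^ 3 := by ring
    _ ≤ B * B ^ 3 := by
        have hB3 : (0:ℝ) ≤ B ^ 3 := by positivity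
        exact mul_le_mul_of_nonneg_right ha hB3
    _ = B ^ 4 := by ring

/-- quadratic root localization, with a WLOG hypothesis. -/
private lemma prony_locate_aux (s₁ s₂ z₁ z₂ μ₁ μ₂ : ℂ) (ε r : ℝ)
    (hz : z₁ ≠ z₂)
    (hfac : ∀ lam : ℂ, lam ^ 2 - s₁ * lam + s₂ = (lam - μ₁) * (lam - μ₂))
    (hq1 : ‖(z₁ - μ₁) * (z₁ - μ₂)‖ ≤ ε)
    (hq2 : ‖(z₂ - μ₁) * (z₂ - μ₂)‖ ≤ ε)
    (hε : ε ≤ ‖z₁ - z₂‖ ^ 2 / 64)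
    (hr : 2 * ε / ‖z₁ - z₂‖ ≤ r)
    (hw : ‖z₁ - μ₁‖ ≤ ‖z₁ - μ₂‖) :
    (∃ lam : ℂ,
        (‖lam - z₁‖ < ‖z₁ - z₂‖ / 4 ∧
          lam ^ 2 - s₁ * lam + s₂ = 0) ∧
        ‖lam - z₁‖ ≤ r ∧
        (∀ mu : ℂ, ‖mu - z₁‖ < ‖z₁ - z₂‖ / 4 →
          mu ^ 2 - s₁ * mu + s₂ = 0 → mu = lam)) ∧
    (∃ lam : ℂ,
        (‖lam - z₂‖ < ‖z₁ - z₂‖ / 4 ∧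
          lam ^ 2 - s₁ * lam + s₂ = 0) ∧
        ‖lam - z₂‖ ≤ r ∧
        (∀ mu : ℂ, ‖mu - z₂‖ < ‖z₁ - z₂‖ / 4 →
          mu ^ 2 - s₁ * mu + s₂ = 0 → mu = lam)) := by
  have hδ : 0 < ‖z₁ - z₂‖ := norm_pos_iff.mpr (sub_ne_zero.mpr hz)
  rw [norm_mul] at hq1 hq2
  have htri1 : ‖z₁ - z₂‖ ≤ ‖z₁ - μ₁‖ + ‖z₂ - μ₁‖ := by
    have := norm_sub_le_norm_sub_add_norm_sub z₁ μ₁ z₂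
    rwa [norm_sub_rev μ₁ z₂] at this
  have htri2 : ‖z₁ - z₂‖ ≤ ‖z₁ - μ₂‖ + ‖z₂ - μ₂‖ := by
    have := norm_sub_le_norm_sub_add_norm_sub z₁ μ₂ z₂
    rwa [norm_sub_rev μ₂ z₂] at this
  set δ := ‖z₁ - z₂‖ with hδdef
  set x1 := ‖z₁ - μ₁‖ with hx1def
  set x2 := ‖z₁ - μ₂‖ with hx2def
  set y1 := ‖z₂ - μ₁‖ with hy1def
  set y2 := ‖z₂ - μ₂‖ with hy2def
  have hx1n : 0 ≤ x1 := norm_nonneg _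
  have hx2n : 0 ≤ x2 := norm_nonneg _
  have hy1n : 0 ≤ y1 := norm_nonneg _
  have hy2n : 0 ≤ y2 := norm_nonneg _
  have hε0 : 0 ≤ ε := le_trans (mul_nonneg hx1n hx2n) hq1
  -- x1 ≤ δ/8
  have h18 : x1 ≤ δ / 8 := by nlinarith [mul_le_mul_of_nonneg_left hw hx1n]
  -- y1 ≥ 7δ/8
  have hy1ge : 7 * δ / 8 ≤ y1 := by linarith
  -- y2 * δ ≤ 2ε
  have hy2δ : y2 * δ ≤ 2 * ε := by nlinarith [mul_le_mul_of_nonneg_left hy1ge hy2n]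
  have hy2r : y2 ≤ 2 * ε / δ := (le_div_iff₀ hδ).mpr hy2δ
  have hy232 : y2 ≤ δ / 32 := by nlinarith
  -- x2 ≥ δ/2
  have hx2ge : δ / 2 ≤ x2 := by linarith
  -- x1 * δ ≤ 2ε
  have hx1δ : x1 * δ ≤ 2 * ε := by nlinarith [mul_le_mul_of_nonneg_left hx2ge hx1n]
  have hx1r : x1 ≤ 2 * ε / δ := (le_div_iff₀ hδ).mpr hx1δ
  have hx132 : x1 ≤ δ / 32 := by nlinarith
  -- roots characterization
  have hroot : ∀ mu : ℂ, mu ^ 2 - s₁ * mu + s₂ = 0 → mu = μ₁ ∨ mu = μ₂ := by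
    intro mu hmu
    have h := (hfac mu).symm.trans hmu
    rcases mul_eq_zero.mp h with h' | h'
    · exact Or.inl (sub_eq_zero.mp h')
    · exact Or.inr (sub_eq_zero.mp h')
  have hrootμ₁ : μ₁ ^ 2 - s₁ * μ₁ + s₂ = 0 := by rw [hfac]; ring
  have hrootμ₂ : μ₂ ^ 2 - s₁ * μ₂ + s₂ = 0 := by rw [hfac]; ring
  have habs1 : ‖μ₁ - z₁‖ = x1 := norm_sub_rev μ₁ z₁
  have habs2 : ‖μ₂ - z₁‖ = x2 := norm_sub_rev μ₂ z₁
  have habs3 : ‖μ₁ - z₂‖ = y1 := norm_sub_rev μ₁ z₂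
  have habs4 : ‖μ₂ - z₂‖ = y2 := norm_sub_rev μ₂ z₂
  constructor
  · refine ⟨μ₁, ⟨?_, hrootμ₁⟩, ?_, ?_⟩
    · rw [habs1]; linarith
    · rw [habs1]; linarith
    · intro mu hmuclose hmuroot
      rcases hroot mu hmuroot with h | h
      · exact h
      · exfalso; rw [h, habs2] at hmuclose; linarith
  · refine ⟨μ₂, ⟨?_, hrootμ₂⟩, ?_, ?_⟩
    · rw [habs4]; linarith
    · rw [habs4]; linarith
    · intro mu hmuclose hmuroot
      rcases hroot mu hmuroot with h | h
      · exfalso; rw [h, habs3] at hmuclose; linarith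
      · exact h

/-- quadratic root localization. -/
private lemma prony_locate (s₁ s₂ z₁ z₂ μ₁ μ₂ : ℂ) (ε r : ℝ)
    (hz : z₁ ≠ z₂)
    (hfac : ∀ lam : ℂ, lam ^ 2 - s₁ * lam + s₂ = (lam - μ₁) * (lam - μ₂))
    (hq1 : ‖(z₁ - μ₁) * (z₁ - μ₂)‖ ≤ ε)
    (hq2 : ‖(z₂ - μ₁) * (z₂ - μ₂)‖ ≤ ε)
    (hε : ε ≤ ‖z₁ - z₂‖ ^ 2 / 64)
    (hr : 2 * ε / ‖z₁ - z₂‖ ≤ r) :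
    (∃ lam : ℂ,
        (‖lam - z₁‖ < ‖z₁ - z₂‖ / 4 ∧
          lam ^ 2 - s₁ * lam + s₂ = 0) ∧
        ‖lam - z₁‖ ≤ r ∧
        (∀ mu : ℂ, ‖mu - z₁‖ < ‖z₁ - z₂‖ / 4 →
          mu ^ 2 - s₁ * mu + s₂ = 0 → mu = lam)) ∧
    (∃ lam : ℂ,
        (‖lam - z₂‖ < ‖z₁ - z₂‖ / 4 ∧
          lam ^ 2 - s₁ * lam + s₂ = 0) ∧
        ‖lam - z₂‖ ≤ r ∧
        (∀ mu : ℂ, ‖mu - z₂‖ < ‖z₁ - z₂‖ / 4 →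
          mu ^ 2 - s₁ * mu + s₂ = 0 → mu = lam)) := by
  rcases le_total (‖z₁ - μ₁‖) (‖z₁ - μ₂‖) with hw | hw
  · exact prony_locate_aux s₁ s₂ z₁ z₂ μ₁ μ₂ ε r hz hfac hq1 hq2 hε hr hw
  · refine prony_locate_aux s₁ s₂ z₁ z₂ μ₂ μ₁ ε r hz ?_ ?_ ?_ hε hr hw
    · intro lam; rw [hfac lam]; ring
    · rwa [mul_comm]
    · rwa [mul_comm]

set_option maxHeartbeats 2000000 in
/-- Deterministic four-sample Prony stability for a two-exponential model. -/
theorem four_sample_prony_stability :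
    ∀ B : ℝ, 1 ≤ B → ∃ c₀ C : ℝ, 0 < c₀ ∧ 0 < C ∧
      ∀ a₁ a₂ z₁ z₂ : ℂ, a₁ * a₂ ≠ 0 → z₁ ≠ z₂ →
        max (‖z₁‖) (‖z₂‖) ≤ B →
        ‖a₁‖ + ‖a₂‖ ≤ B →
        ∀ η : ℝ, 0 ≤ η → η ≤ c₀ * ‖a₁ * a₂‖ * ‖z₁ - z₂‖ ^ 4 →
        ∀ ty : Fin 4 → ℂ,
          (∀ j : Fin 4,
            ‖ty j - (a₁ * z₁ ^ (j : ℕ) + a₂ * z₂ ^ (j : ℕ))‖ ≤ η) →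
        -- lower bound for the perturbed Hankel determinant
        (1 / 2) * ‖a₁ * a₂‖ * ‖z₁ - z₂‖ ^ 2
            ≤ ‖ty 0 * ty 2 - ty 1 ^ 2‖ ∧
        -- stability of the recovered nodes
        (∀ s₁ s₂ : ℂ,
          s₁ = (ty 0 * ty 3 - ty 1 * ty 2) / (ty 0 * ty 2 - ty 1 ^ 2) →
          s₂ = (ty 1 * ty 3 - ty 2 ^ 2) / (ty 0 * ty 2 - ty 1 ^ 2) →
          (∃ lam : ℂ,
            (‖lam - z₁‖ < ‖z₁ - z₂‖ / 4 ∧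
              lam ^ 2 - s₁ * lam + s₂ = 0) ∧
            ‖lam - z₁‖
              ≤ C * η / (‖a₁ * a₂‖ * ‖z₁ - z₂‖ ^ 3) ∧
            (∀ mu : ℂ, ‖mu - z₁‖ < ‖z₁ - z₂‖ / 4 →
              mu ^ 2 - s₁ * mu + s₂ = 0 → mu = lam)) ∧
          (∃ lam : ℂ,
            (‖lam - z₂‖ < ‖z₁ - z₂‖ / 4 ∧
              lam ^ 2 - s₁ * lam + s₂ = 0) ∧
            ‖lam - z₂‖
              ≤ C * η / (‖a₁ * a₂‖ * ‖z₁ - z₂‖ ^ 3) ∧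
            (∀ mu : ℂ, ‖mu - z₂‖ < ‖z₁ - z₂‖ / 4 →
              mu ^ 2 - s₁ * mu + s₂ = 0 → mu = lam))) := by
  intro B hB
  have hB0 : (0:ℝ) < B := lt_of_lt_of_le zero_lt_one hB
  refine ⟨1 / (2304 * B ^ 6), 72 * B ^ 6, by positivity, by positivity, ?_⟩
  intro a₁ a₂ z₁ z₂ ha hz hzB haB η hη0 hηc ty hty
  have hz1 : ‖z₁‖ ≤ B := le_trans (le_max_left _ _) hzB
  have hz2 : ‖z₂‖ ≤ B := le_trans (le_max_right _ _) hzB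
  have hδ : 0 < ‖z₁ - z₂‖ := norm_pos_iff.mpr (sub_ne_zero.mpr hz)
  have hA : 0 < ‖a₁ * a₂‖ := norm_pos_iff.mpr ha
  have hδB : ‖z₁ - z₂‖ ≤ 2 * B := by
    have h := cabs_sub_le z₁ z₂
    linarith
  have hAmul : ‖a₁ * a₂‖ = ‖a₁‖ * ‖a₂‖ := norm_mul _ _
  have hAB : ‖a₁ * a₂‖ ≤ B ^ 2 / 4 := by
    rw [hAmul]
    nlinarith [sq_nonneg (‖a₁‖ - ‖a₂‖),
      norm_nonneg a₁, norm_nonneg a₂]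
  set A := ‖a₁ * a₂‖ with hAdef
  set δ := ‖z₁ - z₂‖ with hδdef
  have hB6 : (0:ℝ) < 2304 * B ^ 6 := by positivity
  have hkey : η * (2304 * B ^ 6) ≤ A * δ ^ 4 := by
    have h1 : 1 / (2304 * B ^ 6) * A * δ ^ 4 = A * δ ^ 4 / (2304 * B ^ 6) := by ring
    exact (le_div_iff₀ hB6).mp (h1 ▸ hηc)
  have hδ2 : δ ^ 2 ≤ 4 * B ^ 2 := by nlinarith
  have hδ4 : δ ^ 4 ≤ 16 * B ^ 4 := by nlinarith [sq_nonneg δ, sq_nonneg B]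
  have hAδ4 : A * δ ^ 4 ≤ 4 * B ^ 6 := by nlinarith [pow_nonneg hδ.le 4]
  have hη1 : η ≤ 1 := by nlinarith [pow_pos hB0 6]
  -- sample values and bounds
  have hM : (1:ℝ) ≤ B ^ 4 := by
    have := pow_le_pow_left₀ (zero_le_one) hB 4
    simpa using this
  have h0 : ‖ty 0 - (a₁ + a₂)‖ ≤ η := by simpa using hty 0
  have h1 : ‖ty 1 - (a₁ * z₁ + a₂ * z₂)‖ ≤ η := by simpa using hty 1
  have h2 : ‖ty 2 - (a₁ * z₁ ^ 2 + a₂ * z₂ ^ 2)‖ ≤ η := by simpa using hty 2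
  have h3 : ‖ty 3 - (a₁ * z₁ ^ 3 + a₂ * z₂ ^ 3)‖ ≤ η := by simpa using hty 3
  have hY0 : ‖a₁ + a₂‖ ≤ B ^ 4 := by
    have := sample_bound a₁ a₂ z₁ z₂ B hB hz1 hz2 haB 0 (by norm_num)
    simpa using this
  have hY1 : ‖a₁ * z₁ + a₂ * z₂‖ ≤ B ^ 4 := by
    have := sample_bound a₁ a₂ z₁ z₂ B hB hz1 hz2 haB 1 (by norm_num)
    simpa using this
  have hY2 : ‖a₁ * z₁ ^ 2 + a₂ * z₂ ^ 2‖ ≤ B ^ 4 :=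
    sample_bound a₁ a₂ z₁ z₂ B hB hz1 hz2 haB 2 (by norm_num)
  have hY3 : ‖a₁ * z₁ ^ 3 + a₂ * z₂ ^ 3‖ ≤ B ^ 4 :=
    sample_bound a₁ a₂ z₁ z₂ B hB hz1 hz2 haB 3 (by norm_num)
  -- products perturbation bounds
  have P02 := abs_prod_pert (ty 0) (ty 2) (a₁ + a₂) (a₁ * z₁ ^ 2 + a₂ * z₂ ^ 2) η (B ^ 4)
    h0 h2 hY0 hY2 hη1 hM
  have P11 := abs_prod_pert (ty 1) (ty 1) (a₁ * z₁ + a₂ * z₂) (a₁ * z₁ + a₂ * z₂) η (B ^ 4)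
    h1 h1 hY1 hY1 hη1 hM
  have P03 := abs_prod_pert (ty 0) (ty 3) (a₁ + a₂) (a₁ * z₁ ^ 3 + a₂ * z₂ ^ 3) η (B ^ 4)
    h0 h3 hY0 hY3 hη1 hM
  have P12 := abs_prod_pert (ty 1) (ty 2) (a₁ * z₁ + a₂ * z₂) (a₁ * z₁ ^ 2 + a₂ * z₂ ^ 2) η (B ^ 4)
    h1 h2 hY1 hY2 hη1 hM
  have P13 := abs_prod_pert (ty 1) (ty 3) (a₁ * z₁ + a₂ * z₂) (a₁ * z₁ ^ 3 + a₂ * z₂ ^ 3) η (B ^ 4)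
    h1 h3 hY1 hY3 hη1 hM
  have P22 := abs_prod_pert (ty 2) (ty 2) (a₁ * z₁ ^ 2 + a₂ * z₂ ^ 2) (a₁ * z₁ ^ 2 + a₂ * z₂ ^ 2)
    η (B ^ 4) h2 h2 hY2 hY2 hη1 hM
  -- Hankel-entry perturbation bounds
  have hE0 : ‖(ty 0 * ty 2 - ty 1 ^ 2) - a₁ * a₂ * (z₁ - z₂) ^ 2‖ ≤ 6 * B ^ 4 * η := by
    have hid : (ty 0 * ty 2 - ty 1 ^ 2) - a₁ * a₂ * (z₁ - z₂) ^ 2 =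
        (ty 0 * ty 2 - (a₁ + a₂) * (a₁ * z₁ ^ 2 + a₂ * z₂ ^ 2)) -
        (ty 1 * ty 1 - (a₁ * z₁ + a₂ * z₂) * (a₁ * z₁ + a₂ * z₂)) := by ring
    rw [hid]
    have := cabs_sub_le (ty 0 * ty 2 - (a₁ + a₂) * (a₁ * z₁ ^ 2 + a₂ * z₂ ^ 2))
      (ty 1 * ty 1 - (a₁ * z₁ + a₂ * z₂) * (a₁ * z₁ + a₂ * z₂))
    linarith
  have hE1 : ‖(ty 0 * ty 3 - ty 1 * ty 2) -
      a₁ * a₂ * (z₁ - z₂) ^ 2 * (z₁ + z₂)‖ ≤ 6 * B ^ 4 * η := by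
    have hid : (ty 0 * ty 3 - ty 1 * ty 2) - a₁ * a₂ * (z₁ - z₂) ^ 2 * (z₁ + z₂) =
        (ty 0 * ty 3 - (a₁ + a₂) * (a₁ * z₁ ^ 3 + a₂ * z₂ ^ 3)) -
        (ty 1 * ty 2 - (a₁ * z₁ + a₂ * z₂) * (a₁ * z₁ ^ 2 + a₂ * z₂ ^ 2)) := by ring
    rw [hid]
    have := cabs_sub_le (ty 0 * ty 3 - (a₁ + a₂) * (a₁ * z₁ ^ 3 + a₂ * z₂ ^ 3))
      (ty 1 * ty 2 - (a₁ * z₁ + a₂ * z₂) * (a₁ * z₁ ^ 2 + a₂ * z₂ ^ 2))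
    linarith
  have hE2 : ‖(ty 1 * ty 3 - ty 2 ^ 2) -
      a₁ * a₂ * (z₁ - z₂) ^ 2 * (z₁ * z₂)‖ ≤ 6 * B ^ 4 * η := by
    have hid : (ty 1 * ty 3 - ty 2 ^ 2) - a₁ * a₂ * (z₁ - z₂) ^ 2 * (z₁ * z₂) =
        (ty 1 * ty 3 - (a₁ * z₁ + a₂ * z₂) * (a₁ * z₁ ^ 3 + a₂ * z₂ ^ 3)) -
        (ty 2 * ty 2 - (a₁ * z₁ ^ 2 + a₂ * z₂ ^ 2) * (a₁ * z₁ ^ 2 + a₂ * z₂ ^ 2)) := by ring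
    rw [hid]
    have := cabs_sub_le (ty 1 * ty 3 - (a₁ * z₁ + a₂ * z₂) * (a₁ * z₁ ^ 3 + a₂ * z₂ ^ 3))
      (ty 2 * ty 2 - (a₁ * z₁ ^ 2 + a₂ * z₂ ^ 2) * (a₁ * z₁ ^ 2 + a₂ * z₂ ^ 2))
    linarith
  -- sizes
  have hexact : ‖a₁ * a₂ * (z₁ - z₂) ^ 2‖ = A * δ ^ 2 := by
    rw [norm_mul, norm_pow]
  -- key bound: 6 B^4 η ≤ A δ² / 2
  have hAδ2pos : 0 < A * δ ^ 2 := by positivity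
  have hi : 6 * B ^ 4 * η ≤ A * δ ^ 2 / 2 := by
    have h4 : A * δ ^ 4 ≤ 4 * B ^ 2 * (A * δ ^ 2) := by nlinarith
    have h5 : 2304 * B ^ 6 * η ≤ 4 * B ^ 2 * (A * δ ^ 2) := by linarith
    have hB6' : (0:ℝ) < B ^ 6 := by positivity
    nlinarith [mul_nonneg (mul_nonneg (by positivity : (0:ℝ) ≤ 4 * B ^ 2) hAδ2pos.le) hη0,
      sq_nonneg B, pow_pos hB0 2, mul_pos (pow_pos hB0 2) hAδ2pos]
  -- lower bound for the perturbed Hankel determinant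
  have hlow : A * δ ^ 2 / 2 ≤ ‖ty 0 * ty 2 - ty 1 ^ 2‖ := by
    have htri := cabs_le_add_sub (ty 0 * ty 2 - ty 1 ^ 2) (a₁ * a₂ * (z₁ - z₂) ^ 2)
    rw [hexact] at htri
    linarith
  refine ⟨by linarith, ?_⟩
  intro s₁ s₂ hs₁ hs₂
  have hD0ne : ty 0 * ty 2 - ty 1 ^ 2 ≠ 0 := by
    intro h
    rw [h] at hlow
    simp at hlow
    linarith
  have hs1' : s₁ * (ty 0 * ty 2 - ty 1 ^ 2) = ty 0 * ty 3 - ty 1 * ty 2 := by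
    rw [hs₁, div_mul_cancel₀ _ hD0ne]
  have hs2' : s₂ * (ty 0 * ty 2 - ty 1 ^ 2) = ty 1 * ty 3 - ty 2 ^ 2 := by
    rw [hs₂, div_mul_cancel₀ _ hD0ne]
  -- bound on the perturbed quadratic at z₁ and z₂
  have hEb : ∀ z : ℂ, ‖z‖ ≤ B →
      ‖z ^ 2 * ((ty 0 * ty 2 - ty 1 ^ 2) - a₁ * a₂ * (z₁ - z₂) ^ 2) -
        z * ((ty 0 * ty 3 - ty 1 * ty 2) - a₁ * a₂ * (z₁ - z₂) ^ 2 * (z₁ + z₂)) +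
        ((ty 1 * ty 3 - ty 2 ^ 2) - a₁ * a₂ * (z₁ - z₂) ^ 2 * (z₁ * z₂))‖
      ≤ 18 * B ^ 6 * η := by
    intro z hzb
    have hzn : (0:ℝ) ≤ ‖z‖ := norm_nonneg _
    have t1 : ‖z ^ 2 * ((ty 0 * ty 2 - ty 1 ^ 2) - a₁ * a₂ * (z₁ - z₂) ^ 2)‖
        ≤ B ^ 2 * (6 * B ^ 4 * η) := by
      rw [norm_mul, norm_pow]
      exact mul_le_mul (pow_le_pow_left₀ hzn hzb 2) hE0 (norm_nonneg _)
        (by positivity)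
    have t2 : ‖z * ((ty 0 * ty 3 - ty 1 * ty 2) -
        a₁ * a₂ * (z₁ - z₂) ^ 2 * (z₁ + z₂))‖ ≤ B * (6 * B ^ 4 * η) := by
      rw [norm_mul]
      exact mul_le_mul hzb hE1 (norm_nonneg _) hB0.le
    have tr1 := norm_add_le
      (z ^ 2 * ((ty 0 * ty 2 - ty 1 ^ 2) - a₁ * a₂ * (z₁ - z₂) ^ 2) -
        z * ((ty 0 * ty 3 - ty 1 * ty 2) - a₁ * a₂ * (z₁ - z₂) ^ 2 * (z₁ + z₂)))
      ((ty 1 * ty 3 - ty 2 ^ 2) - a₁ * a₂ * (z₁ - z₂) ^ 2 * (z₁ * z₂))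
    have tr2 := cabs_sub_le
      (z ^ 2 * ((ty 0 * ty 2 - ty 1 ^ 2) - a₁ * a₂ * (z₁ - z₂) ^ 2))
      (z * ((ty 0 * ty 3 - ty 1 * ty 2) - a₁ * a₂ * (z₁ - z₂) ^ 2 * (z₁ + z₂)))
    have hBB : B ≤ B ^ 2 := by nlinarith
    have hB1' : (1:ℝ) ≤ B ^ 2 := by nlinarith
    nlinarith [mul_nonneg (mul_nonneg (by positivity : (0:ℝ) ≤ 6 * B ^ 4) hη0)
        (sub_nonneg.mpr hBB),
      mul_nonneg (mul_nonneg (by positivity : (0:ℝ) ≤ 6 * B ^ 4) hη0)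
        (sub_nonneg.mpr hB1')]
  have hQ1 : ‖z₁ ^ 2 - s₁ * z₁ + s₂‖ ≤ 36 * B ^ 6 * η / (A * δ ^ 2) := by
    have hqz : (ty 0 * ty 2 - ty 1 ^ 2) * (z₁ ^ 2 - s₁ * z₁ + s₂) =
        z₁ ^ 2 * ((ty 0 * ty 2 - ty 1 ^ 2) - a₁ * a₂ * (z₁ - z₂) ^ 2) -
        z₁ * ((ty 0 * ty 3 - ty 1 * ty 2) - a₁ * a₂ * (z₁ - z₂) ^ 2 * (z₁ + z₂)) +
        ((ty 1 * ty 3 - ty 2 ^ 2) - a₁ * a₂ * (z₁ - z₂) ^ 2 * (z₁ * z₂)) := by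
      linear_combination (-z₁) * hs1' + hs2'
    have hc : ‖ty 0 * ty 2 - ty 1 ^ 2‖ *
        ‖z₁ ^ 2 - s₁ * z₁ + s₂‖ ≤ 18 * B ^ 6 * η := by
      rw [← norm_mul, hqz]; exact hEb z₁ hz1
    rw [le_div_iff₀ hAδ2pos]
    nlinarith [norm_nonneg (z₁ ^ 2 - s₁ * z₁ + s₂),
      mul_le_mul_of_nonneg_right hlow
        (norm_nonneg (z₁ ^ 2 - s₁ * z₁ + s₂))]
  have hQ2 : ‖z₂ ^ 2 - s₁ * z₂ + s₂‖ ≤ 36 * B ^ 6 * η / (A * δ ^ 2) := by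
    have hqz : (ty 0 * ty 2 - ty 1 ^ 2) * (z₂ ^ 2 - s₁ * z₂ + s₂) =
        z₂ ^ 2 * ((ty 0 * ty 2 - ty 1 ^ 2) - a₁ * a₂ * (z₁ - z₂) ^ 2) -
        z₂ * ((ty 0 * ty 3 - ty 1 * ty 2) - a₁ * a₂ * (z₁ - z₂) ^ 2 * (z₁ + z₂)) +
        ((ty 1 * ty 3 - ty 2 ^ 2) - a₁ * a₂ * (z₁ - z₂) ^ 2 * (z₁ * z₂)) := by
      linear_combination (-z₂) * hs1' + hs2'
    have hc : ‖ty 0 * ty 2 - ty 1 ^ 2‖ *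
        ‖z₂ ^ 2 - s₁ * z₂ + s₂‖ ≤ 18 * B ^ 6 * η := by
      rw [← norm_mul, hqz]; exact hEb z₂ hz2
    rw [le_div_iff₀ hAδ2pos]
    nlinarith [norm_nonneg (z₂ ^ 2 - s₁ * z₂ + s₂),
      mul_le_mul_of_nonneg_right hlow
        (norm_nonneg (z₂ ^ 2 - s₁ * z₂ + s₂))]
  -- factor the quadratic
  obtain ⟨d, hd⟩ := IsAlgClosed.exists_pow_nat_eq (s₁ ^ 2 - 4 * s₂) (n := 2) (by norm_num)
  have hfac : ∀ lam : ℂ, lam ^ 2 - s₁ * lam + s₂ =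
      (lam - (s₁ + d) / 2) * (lam - (s₁ - d) / 2) := by
    intro lam; linear_combination hd / 4
  have hq1f : ‖(z₁ - (s₁ + d) / 2) * (z₁ - (s₁ - d) / 2)‖
      ≤ 36 * B ^ 6 * η / (A * δ ^ 2) := by rw [← hfac]; exact hQ1
  have hq2f : ‖(z₂ - (s₁ + d) / 2) * (z₂ - (s₁ - d) / 2)‖
      ≤ 36 * B ^ 6 * η / (A * δ ^ 2) := by rw [← hfac]; exact hQ2
  have hεb : 36 * B ^ 6 * η / (A * δ ^ 2) ≤ δ ^ 2 / 64 := by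
    rw [div_le_div_iff₀ hAδ2pos (by norm_num)]
    have hh : δ ^ 2 * (A * δ ^ 2) = A * δ ^ 4 := by ring
    rw [hh]
    linarith [hkey]
  have hrb : 2 * (36 * B ^ 6 * η / (A * δ ^ 2)) / δ ≤ 72 * B ^ 6 * η / (A * δ ^ 3) := by
    apply le_of_eq
    field_simp
    ring
  exact prony_locate s₁ s₂ z₁ z₂ ((s₁ + d) / 2) ((s₁ - d) / 2)
    (36 * B ^ 6 * η / (A * δ ^ 2)) (72 * B ^ 6 * η / (A * δ ^ 3)) hz hfac hq1f hq2f hεb hrb
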